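/- Let g : U × X → X be a measurable driven system between Polish spaces with a well-defined Foias operator P_g : P(U) × P_1(X) → P_1(X). Fix θ ∈ P(U) and 0 < c < 1, and suppose g is a (θ, c)-stochastic contraction, i.e., ∫_U d_X(g(u,x), g(u,y)) dθ(u) ≤ c · d_X(x,y) for all x, y ∈ X. Then P_g(θ, ·) is a c-contraction with respect to the Wasserstein-1 distance: W(P_g(θ, μ₁), P_g(θ, μ₂)) ≤ c · W(μ₁, μ₂) for all μ₁, μ₂ ∈ P_1(X). -/

import Mathlib

open MeasureTheory ENNReal

/-- The Wasserstein-1 distance: infimum over couplings of the expected distance. -/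
noncomputable def W1 {Y : Type*} [PseudoEMetricSpace Y] [MeasurableSpace Y]
    (μ ν : Measure Y) : ℝ≥0∞ :=
  ⨅ (π : Measure (Y × Y)) (_ : π.map Prod.fst = μ ∧ π.map Prod.snd = ν),
    ∫⁻ p, edist p.1 p.2 ∂π

theorem stmt_6 {U X : Type*}
    [MeasurableSpace U] [MetricSpace U] [BorelSpace U] [PolishSpace U]
    [MeasurableSpace X] [MetricSpace X] [BorelSpace X] [PolishSpace X]
    (g : U → X → X) (hg : Measurable (Function.uncurry g))
    (θ : Measure U) [IsProbabilityMeasure θ]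
    (c : NNReal) (hc0 : 0 < c) (hc1 : c < 1)
    (hcontr : ∀ x y : X, ∫⁻ u, edist (g u x) (g u y) ∂θ ≤ c * edist x y)
    (hwd : ∀ μ : Measure X, IsProbabilityMeasure μ →
      (∃ x₀ : X, ∫⁻ x, edist x₀ x ∂μ < ⊤) →
      ∃ x₀ : X, ∫⁻ x, edist x₀ x ∂((θ.prod μ).map (Function.uncurry g)) < ⊤)
    (μ₁ μ₂ : Measure X) [IsProbabilityMeasure μ₁] [IsProbabilityMeasure μ₂]
    (h₁ : ∃ x₀ : X, ∫⁻ x, edist x₀ x ∂μ₁ < ⊤)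
    (h₂ : ∃ x₀ : X, ∫⁻ x, edist x₀ x ∂μ₂ < ⊤) :
    W1 ((θ.prod μ₁).map (Function.uncurry g)) ((θ.prod μ₂).map (Function.uncurry g))
      ≤ c * W1 μ₁ μ₂ := by
  have hc0' : (c : ℝ≥0∞) ≠ 0 := by exact_mod_cast hc0.ne'
  have hct : (c : ℝ≥0∞) ≠ ⊤ := coe_ne_top
  rw [show W1 μ₁ μ₂ = ⨅ (π : Measure (X × X)) (_ : π.map Prod.fst = μ₁ ∧ π.map Prod.snd = μ₂),
      ∫⁻ p, edist p.1 p.2 ∂π from rfl,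
    ENNReal.mul_iInf_of_ne hc0' hct]
  refine le_iInf fun π => ?_
  rw [ENNReal.mul_iInf_of_ne hc0' hct]
  refine le_iInf fun hπ => ?_
  obtain ⟨hm1, hm2⟩ := hπ
  have hπuniv : IsProbabilityMeasure π := by
    constructor
    have := congrArg (fun m : Measure X => m Set.univ) hm1
    simpa [Measure.map_apply measurable_fst MeasurableSet.univ] using this
  -- the transported coupling
  set F : U × (X × X) → X × X := fun p => (g p.1 p.2.1, g p.1 p.2.2) with hFdef
  have hm1' : Measurable fun p : U × (X × X) => (p.1, p.2.1) :=
    measurable_fst.prodMk (measurable_fst.comp measurable_snd)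
  have hm2' : Measurable fun p : U × (X × X) => (p.1, p.2.2) :=
    measurable_fst.prodMk (measurable_snd.comp measurable_snd)
  have hF : Measurable F := (hg.comp hm1').prodMk (hg.comp hm2')
  have e1 : θ.prod (π.map Prod.fst) = (θ.prod π).map (Prod.map id Prod.fst) := by
    have := Measure.map_prod_map (f := id) (g := Prod.fst) θ π measurable_id measurable_fst
    simpa [Measure.map_id] using this
  have e2 : θ.prod (π.map Prod.snd) = (θ.prod π).map (Prod.map id Prod.snd) := by
    have := Measure.map_prod_map (f := id) (g := Prod.snd) θ π measurable_id measurable_snd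
    simpa [Measure.map_id] using this
  have hprojfst : ((θ.prod π).map F).map Prod.fst = (θ.prod μ₁).map (Function.uncurry g) := by
    rw [Measure.map_map measurable_fst hF, ← hm1, e1,
      Measure.map_map hg (measurable_id.prodMap measurable_fst)]
    rfl
  have hprojsnd : ((θ.prod π).map F).map Prod.snd = (θ.prod μ₂).map (Function.uncurry g) := by
    rw [Measure.map_map measurable_snd hF, ← hm2, e2,
      Measure.map_map hg (measurable_id.prodMap measurable_snd)]
    rfl
  refine le_trans (iInf_le_of_le ((θ.prod π).map F)
    (iInf_le_of_le ⟨hprojfst, hprojsnd⟩ le_rfl)) ?_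
  -- cost bound
  have hcostmeas : Measurable fun q : U × (X × X) => edist (g q.1 q.2.1) (g q.1 q.2.2) :=
    (hg.comp hm1').edist (hg.comp hm2')
  calc ∫⁻ p, edist p.1 p.2 ∂((θ.prod π).map F)
      = ∫⁻ q, edist (g q.1 q.2.1) (g q.1 q.2.2) ∂(θ.prod π) := by
        rw [lintegral_map (measurable_edist) hF]
    _ = ∫⁻ z, ∫⁻ u, edist (g u z.1) (g u z.2) ∂θ ∂π := by
        exact lintegral_prod_symm _ hcostmeas.aemeasurable
    _ ≤ ∫⁻ z, (c : ℝ≥0∞) * edist z.1 z.2 ∂π :=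
        lintegral_mono fun z => hcontr z.1 z.2
    _ = (c : ℝ≥0∞) * ∫⁻ z, edist z.1 z.2 ∂π := lintegral_const_mul' _ _ hct
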